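/- Let 0<q<1 and let l be a positive integer. For every real number t, ∏_{m=0}^{l-1}(1 - q^{2m} t) - ∑_{m=1}^{l} (-1)^m q^{-m(m+1)} binom(l,m)_{q^{-2}} t^m = 1 + ∑_{m=1}^{l} (-1)^m q^{m(m-1)} (1 - q^{-2ml}) binom(l,m)_{q^2} t^m. (This is the computation of the trace of the idempotent E[1] of the line bundle L[1] over the quantum teardrop: Tr E[1] = 1 + ∑_{m=1}^{l} (-1)^m q^{m(m-1)}(1-q^{-2ml}) binom(l,m)_{q^2} a^m.) -/

import Mathlib

noncomputable def qbinom (x : ℝ) (l m : ℕ) : ℝ :=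
  ∏ i ∈ Finset.range m, (1 - x ^ (l - m + i + 1)) / (1 - x ^ (i + 1))

noncomputable def qden (x : ℝ) (k : ℕ) : ℝ := ∏ i ∈ Finset.range k, (1 - x ^ (i + 1))

lemma one_sub_pow_ne {x : ℝ} (hx : ∀ i : ℕ, 0 < i → x ^ i ≠ 1) {j : ℕ} (hj : 0 < j) :
    (1 : ℝ) - x ^ j ≠ 0 :=
  sub_ne_zero.2 fun h => hx j hj h.symm

lemma qden_ne_zero {x : ℝ} (hx : ∀ i : ℕ, 0 < i → x ^ i ≠ 1) (k : ℕ) : qden x k ≠ 0 :=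
  Finset.prod_ne_zero_iff.2 fun i _ => one_sub_pow_ne hx (Nat.succ_pos i)

lemma qden_succ (x : ℝ) (k : ℕ) : qden x (k + 1) = qden x k * (1 - x ^ (k + 1)) :=
  Finset.prod_range_succ _ _

lemma qbinom_eq {x : ℝ} (hx : ∀ i : ℕ, 0 < i → x ^ i ≠ 1) {l m : ℕ} (h : m ≤ l) :
    qbinom x l m = qden x l / (qden x m * qden x (l - m)) := by
  obtain ⟨k, rfl⟩ := Nat.exists_eq_add_of_le h
  have hsub : m + k - m = k := by omega
  have hnum : qden x (m + k) = qden x k * ∏ i ∈ Finset.range m, (1 - x ^ (k + i + 1)) := by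
    unfold qden
    rw [add_comm m k, Finset.prod_range_add]
  unfold qbinom
  rw [hsub, Finset.prod_div_distrib, hnum]
  have h1 : qden x m ≠ 0 := qden_ne_zero hx m
  have h2 : qden x k ≠ 0 := qden_ne_zero hx k
  show (∏ i ∈ Finset.range m, (1 - x ^ (k + i + 1))) / qden x m = _
  field_simp

lemma qbinom_zero (x : ℝ) (l : ℕ) : qbinom x l 0 = 1 := by simp [qbinom]

lemma qbinom_self {x : ℝ} (hx : ∀ i : ℕ, 0 < i → x ^ i ≠ 1) (l : ℕ) : qbinom x l l = 1 := by
  unfold qbinom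
  simp only [Nat.sub_self, Nat.zero_add]
  exact Finset.prod_eq_one fun i _ =>
    div_self (one_sub_pow_ne hx (i.succ_pos))

lemma qbinom_pascal {x : ℝ} (hx : ∀ i : ℕ, 0 < i → x ^ i ≠ 1) {l m : ℕ} (h : m + 1 ≤ l) :
    qbinom x (l + 1) (m + 1) = qbinom x l (m + 1) + x ^ (l - m) * qbinom x l m := by
  obtain ⟨k, rfl⟩ : ∃ k, l = m + 1 + k := ⟨l - (m + 1), by omega⟩
  rw [qbinom_eq hx (by omega), qbinom_eq hx (by omega), qbinom_eq hx (by omega)]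
  have e1 : m + 1 + k + 1 - (m + 1) = k + 1 := by omega
  have e2 : m + 1 + k - (m + 1) = k := by omega
  have e3 : m + 1 + k - m = k + 1 := by omega
  rw [e1, e2, e3]
  have d1 : qden x (m + 1 + k + 1) = qden x (m + 1 + k) * (1 - x ^ (m + 1 + k + 1)) :=
    qden_succ _ _
  have d2 : qden x (k + 1) = qden x k * (1 - x ^ (k + 1)) := qden_succ _ _
  have d3 : qden x (m + 1) = qden x m * (1 - x ^ (m + 1)) := qden_succ _ _
  rw [d1, d2, d3]
  have h1 := qden_ne_zero hx (m + 1 + k)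
  have h2 := qden_ne_zero hx k
  have h3 := qden_ne_zero hx m
  have h4 : (1:ℝ) - x ^ (m + 1 + k + 1) ≠ 0 := one_sub_pow_ne hx (by omega)
  have h5 : (1:ℝ) - x ^ (k + 1) ≠ 0 := one_sub_pow_ne hx (by omega)
  have h6 : (1:ℝ) - x ^ (m + 1) ≠ 0 := one_sub_pow_ne hx (by omega)
  field_simp
  ring

lemma qbinom_inv {x : ℝ} (hx0 : x ≠ 0) (hx : ∀ i : ℕ, 0 < i → x ^ i ≠ 1) {l m : ℕ}
    (h : m ≤ l) :
    qbinom x⁻¹ l m = (x ^ (m * (l - m)))⁻¹ * qbinom x l m := by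
  unfold qbinom
  have : (x ^ (m * (l - m)))⁻¹ = ∏ _i ∈ Finset.range m, (x ^ (l - m))⁻¹ := by
    rw [Finset.prod_const, Finset.card_range, inv_pow, ← pow_mul, mul_comm]
  rw [this, ← Finset.prod_mul_distrib]
  refine Finset.prod_congr rfl fun i _ => ?_
  have h1 : (1:ℝ) - x ^ (i + 1) ≠ 0 := one_sub_pow_ne hx (by omega)
  have h2 : x ^ (i + 1) ≠ 0 := pow_ne_zero _ hx0
  have h3 : x ^ (l - m) ≠ 0 := pow_ne_zero _ hx0
  have h4 : x ^ (l - m + i + 1) ≠ 0 := pow_ne_zero _ hx0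
  rw [inv_pow, inv_pow]
  have h5 : (1:ℝ) - (x ^ (i+1))⁻¹ ≠ 0 := by
    rw [sub_ne_zero]
    intro hcon
    have h7 : x ^ (i+1) = 1 := by
      have h8 := congrArg Inv.inv hcon
      simpa using h8.symm
    exact hx (i+1) (by omega) h7
  rw [div_eq_iff h5]
  field_simp
  ring

lemma nat_e1 (i k : ℕ) : (i+1)*i + 2*(k+1) = i*(i-1) + 2*(i+1+k) := by
  cases i with
  | zero => omega
  | succ j => simp only [Nat.succ_sub_one]; ring

lemma nat_e2 (l : ℕ) : (l+1)*l = l*(l-1) + 2*l := by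
  cases l with
  | zero => rfl
  | succ j => simp only [Nat.succ_sub_one]; ring

lemma nat_e3 (j k : ℕ) : (j+1)*((j+1)-1) + ((j+1)*((j+1)+1) + 2*((j+1)*k)) = 2*(j+1)*((j+1)+k) := by
  simp only [Nat.succ_sub_one]; ring

lemma qbinom_expand (q : ℝ) (hq0 : 0 < q) (hq1 : q < 1) (l : ℕ) (t : ℝ) :
    ∏ m ∈ Finset.range l, (1 - q ^ (2 * m) * t)
      = ∑ m ∈ Finset.range (l + 1),
          (-1 : ℝ) ^ m * q ^ (m * (m - 1)) * qbinom (q ^ 2) l m * t ^ m := by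
  have hx : ∀ i : ℕ, 0 < i → (q ^ 2) ^ i ≠ 1 := by
    intro i hi
    rw [← pow_mul]
    exact ne_of_lt (pow_lt_one₀ hq0.le hq1 (by omega))
  induction l with
  | zero => simp [qbinom]
  | succ l ih =>
    rw [Finset.prod_range_succ, ih]
    set f : ℕ → ℝ := fun m => (-1 : ℝ) ^ m * q ^ (m * (m - 1)) * qbinom (q ^ 2) l m * t ^ m
      with hf
    set g : ℕ → ℝ := fun m => (-1 : ℝ) ^ m * q ^ (m * (m - 1)) * qbinom (q ^ 2) (l+1) m * t ^ m
      with hg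
    have hterm : ∀ i ∈ Finset.range l, g (i + 1) = f (i + 1) - q ^ (2 * l) * t * f i := by
      intro i hi
      have hil : i + 1 ≤ l := Finset.mem_range.1 hi
      simp only [hf, hg]
      rw [qbinom_pascal hx hil]
      have hb : ((q:ℝ) ^ 2) ^ (l - i) = q ^ (2 * (l - i)) := by rw [← pow_mul]
      have he : q ^ ((i+1) * (i+1-1)) * q ^ (2 * (l - i)) = q ^ (i * (i-1)) * q ^ (2 * l) := by
        rw [← pow_add, ← pow_add]; congr 1
        obtain ⟨k, hk⟩ : ∃ k, l - i = k + 1 := ⟨l - i - 1, by omega⟩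
        have hl' : l = i + 1 + k := by omega
        rw [Nat.add_sub_cancel, hk, hl']
        exact nat_e1 i k
      rw [hb]
      linear_combination ((-1:ℝ) ^ (i+1) * qbinom (q ^ 2) l i * t ^ (i+1)) * he
    have htop : g (l + 1) = -(q ^ (2 * l) * t * f l) := by
      simp only [hf, hg]
      rw [qbinom_self hx, qbinom_self hx]
      have he : q ^ ((l+1) * (l+1-1)) = q ^ (l * (l-1)) * q ^ (2 * l) := by
        rw [← pow_add]; congr 1
        rw [Nat.add_sub_cancel]
        exact nat_e2 l
      rw [he]; ring
    have h0 : f 0 = 1 := by simp [hf, qbinom_zero]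
    have hg0 : g 0 = 1 := by simp [hg, qbinom_zero]
    have hS1 : ∑ m ∈ Finset.range (l+1), f m = (∑ i ∈ Finset.range l, f (i+1)) + f 0 :=
      Finset.sum_range_succ' f l
    have hS2 : ∑ m ∈ Finset.range (l+1), f m = (∑ i ∈ Finset.range l, f i) + f l :=
      Finset.sum_range_succ f l
    have hR : ∑ m ∈ Finset.range (l+1+1), g m
        = ((∑ i ∈ Finset.range l, g (i+1)) + g (l+1)) + g 0 := by
      rw [Finset.sum_range_succ' g (l+1), Finset.sum_range_succ]
    rw [hR, Finset.sum_congr rfl hterm, Finset.sum_sub_distrib, htop, hg0]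
    have : ∑ i ∈ Finset.range l, q ^ (2*l) * t * f i
        = q ^ (2*l) * t * ∑ i ∈ Finset.range l, f i := by
      rw [Finset.mul_sum]
    rw [this]
    have e1 : ∑ i ∈ Finset.range l, f (i+1) = (∑ m ∈ Finset.range (l+1), f m) - f 0 := by
      rw [hS1]; ring
    have e2 : ∑ i ∈ Finset.range l, f i = (∑ m ∈ Finset.range (l+1), f m) - f l := by
      rw [hS2]; ring
    rw [e1, e2, h0]
    ring

theorem trace_idempotent_identity
    (q : ℝ) (hq0 : 0 < q) (hq1 : q < 1) (l : ℕ) (hl : 0 < l) (t : ℝ) :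
    (∏ m ∈ Finset.range l, (1 - q ^ (2 * m) * t))
      - ∑ m ∈ Finset.Icc 1 l,
          (-1 : ℝ) ^ m * (q ^ (m * (m + 1)))⁻¹ * qbinom (q⁻¹ ^ 2) l m * t ^ m
    = 1 + ∑ m ∈ Finset.Icc 1 l,
          (-1 : ℝ) ^ m * q ^ (m * (m - 1)) * (1 - (q ^ (2 * m * l))⁻¹) *
            qbinom (q ^ 2) l m * t ^ m := by
  have hq : q ≠ 0 := hq0.ne'
  have hx : ∀ i : ℕ, 0 < i → (q ^ 2) ^ i ≠ 1 := by
    intro i hi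
    rw [← pow_mul]
    exact ne_of_lt (pow_lt_one₀ hq0.le hq1 (by omega))
  have hx0 : (q:ℝ) ^ 2 ≠ 0 := pow_ne_zero _ hq
  rw [qbinom_expand q hq0 hq1 l t]
  have hsplit : Finset.range (l+1) = insert 0 (Finset.Icc 1 l) := by
    ext i; simp [Finset.mem_Icc]; omega
  rw [hsplit, Finset.sum_insert (by simp)]
  have h0 : (-1:ℝ)^0 * q ^ (0 * (0-1)) * qbinom (q ^ 2) l 0 * t ^ 0 = 1 := by
    simp [qbinom_zero]
  rw [h0, add_sub_assoc, ← Finset.sum_sub_distrib]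
  congr 1
  refine Finset.sum_congr rfl fun m hm => ?_
  obtain ⟨hm1, hml⟩ := Finset.mem_Icc.1 hm
  have hinv : (q⁻¹ : ℝ) ^ 2 = ((q:ℝ) ^ 2)⁻¹ := inv_pow q 2
  rw [hinv, qbinom_inv hx0 hx hml]
  have hb : ((q:ℝ) ^ 2) ^ (m * (l - m)) = q ^ (2 * (m * (l - m))) := by rw [← pow_mul]
  rw [hb]
  have key : q ^ (m*(m-1)) * (q ^ (m*(m+1)) * q ^ (2*(m*(l-m)))) = q ^ (2*m*l) := by
    rw [← pow_add, ← pow_add]; congr 1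
    obtain ⟨j, rfl⟩ : ∃ j, m = j + 1 := ⟨m - 1, by omega⟩
    obtain ⟨k, rfl⟩ : ∃ k, l = (j + 1) + k := ⟨l - (j+1), by omega⟩
    rw [Nat.add_sub_cancel_left]
    exact nat_e3 j k
  have hne1 : (q:ℝ) ^ (m*(m+1)) ≠ 0 := pow_ne_zero _ hq
  have hne2 : (q:ℝ) ^ (2*(m*(l-m))) ≠ 0 := pow_ne_zero _ hq
  have hne3 : (q:ℝ) ^ (2*m*l) ≠ 0 := pow_ne_zero _ hq
  have hsq : (q:ℝ) ^ (m*(m+1)) = q ^ m * q ^ (m^2) := by rw [← pow_add]; congr 1; ring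
  rw [hsq] at key
  field_simp
  linear_combination (qbinom (q^2) l m * t^m) * key
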